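/- arXiv:1601.04175 — 8 statements merged into one kernel-verified Lean document; each statement's English description precedes it below -/
import Mathlib

section
/- Let n ≥ 1, let P be an n×n real sub-stochastic matrix, let γ ∈ [0,1), let k ∈ {1,…,n}, and let e ∈ ℝⁿ be the standard basis vector with e_k = 1 and all other entries 0. Then e is the unique stochastic vector maximizing π ↦ Σ_{t=0}^∞ γ^t (πᵀ Pᵗ e); that is, for every stochastic vector π ∈ ℝⁿ with π ≠ e, one has Σ_{t=0}^∞ γ^t (πᵀ Pᵗ e) < Σ_{t=0}^∞ γ^t (eᵀ Pᵗ e). -/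
open Matrix

/-- A sub-stochastic matrix `P`, a discount `γ ∈ [0,1)`, the standard basis vector `e` at
index `k`: then `e` is the unique stochastic vector maximizing
`π ↦ ∑_{t} γ^t (πᵀ Pᵗ e)`. -/
theorem stmt_0 (n : ℕ) (hn : 1 ≤ n) (P : Matrix (Fin n) (Fin n) ℝ)
    (hPnn : ∀ i j, 0 ≤ P i j) (hProw : ∀ i, ∑ j, P i j ≤ 1)
    (γ : ℝ) (hγ0 : 0 ≤ γ) (hγ1 : γ < 1) (k : Fin n)
    (e : Fin n → ℝ) (he : e = fun j => if j = k then (1 : ℝ) else 0)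
    (p : Fin n → ℝ) (hpnn : ∀ i, 0 ≤ p i) (hpsum : ∑ i, p i = 1)
    (hpe : p ≠ e) :
    ∑' t : ℕ, γ ^ t * (p ⬝ᵥ ((P ^ t) *ᵥ e)) <
      ∑' t : ℕ, γ ^ t * (e ⬝ᵥ ((P ^ t) *ᵥ e)) := by
  subst he
  have hpow : ∀ t : ℕ, (∀ i j, 0 ≤ (P ^ t) i j) ∧ (∀ i, ∑ j, (P ^ t) i j ≤ 1) := by
    intro t
    induction t with
    | zero =>
      refine ⟨fun i j => ?_, fun i => ?_⟩
      · simp only [pow_zero, Matrix.one_apply]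
        split <;> norm_num
      · simp [pow_zero, Matrix.one_apply]
    | succ t ih =>
      refine ⟨fun i j => ?_, fun i => ?_⟩
      · rw [pow_succ, Matrix.mul_apply]
        exact Finset.sum_nonneg fun l _ => mul_nonneg (ih.1 i l) (hPnn l j)
      · rw [pow_succ]
        calc ∑ j, (P ^ t * P) i j = ∑ l, (P ^ t) i l * ∑ j, P l j := by
              simp only [Matrix.mul_apply, Finset.mul_sum]
              rw [Finset.sum_comm]
          _ ≤ ∑ l, (P ^ t) i l * 1 :=
              Finset.sum_le_sum fun l _ => mul_le_mul_of_nonneg_left (hProw l) (ih.1 i l)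
          _ = ∑ l, (P ^ t) i l := by simp
          _ ≤ 1 := ih.2 i
  have hent : ∀ (t : ℕ) i, (P ^ t) i k ≤ 1 := fun t i =>
    le_trans (Finset.single_le_sum (fun j _ => (hpow t).1 i j) (Finset.mem_univ k)) ((hpow t).2 i)
  have hsum : ∀ i, Summable (fun t : ℕ => γ ^ t * (P ^ t) i k) := by
    intro i
    apply Summable.of_nonneg_of_le
      (fun t => mul_nonneg (pow_nonneg hγ0 t) ((hpow t).1 i k))
      (fun t => ?_) (summable_geometric_of_lt_one hγ0 hγ1)
    calc γ ^ t * (P ^ t) i k ≤ γ ^ t * 1 :=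
          mul_le_mul_of_nonneg_left (hent t i) (pow_nonneg hγ0 t)
      _ = γ ^ t := mul_one _
  set v : Fin n → ℝ := fun i => ∑' t : ℕ, γ ^ t * (P ^ t) i k with hv
  have hmv : ∀ (t : ℕ) i, ((P ^ t) *ᵥ fun j => if j = k then (1 : ℝ) else 0) i = (P ^ t) i k := by
    intro t i
    simp [Matrix.mulVec, dotProduct, mul_ite]
  have hL : ∑' t : ℕ, γ ^ t * (p ⬝ᵥ ((P ^ t) *ᵥ fun j => if j = k then (1 : ℝ) else 0))
      = ∑ i, p i * v i := by
    have h1 : ∀ t : ℕ, γ ^ t * (p ⬝ᵥ ((P ^ t) *ᵥ fun j => if j = k then (1 : ℝ) else 0))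
        = ∑ i, p i * (γ ^ t * (P ^ t) i k) := by
      intro t
      simp only [dotProduct, hmv, Finset.mul_sum]
      exact Finset.sum_congr rfl fun i _ => by ring
    rw [tsum_congr h1, Summable.tsum_finsetSum (fun i _ => (hsum i).mul_left (p i))]
    exact Finset.sum_congr rfl fun i _ => tsum_mul_left
  have hR : ∑' t : ℕ, γ ^ t *
      ((fun j => if j = k then (1 : ℝ) else 0) ⬝ᵥ ((P ^ t) *ᵥ fun j => if j = k then (1 : ℝ) else 0))
      = v k := by
    apply tsum_congr
    intro t
    simp [dotProduct, hmv, ite_mul]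
  have hvnn : ∀ i, 0 ≤ v i := fun i =>
    tsum_nonneg fun t => mul_nonneg (pow_nonneg hγ0 t) ((hpow t).1 i k)
  have hvk1 : (1 : ℝ) ≤ v k := by
    have h := Summable.le_tsum (hsum k) 0
      (fun t _ => mul_nonneg (pow_nonneg hγ0 t) ((hpow t).1 k k))
    simpa [Matrix.one_apply] using h
  have hrec : ∀ i, i ≠ k → v i = γ * ∑ j, P i j * v j := by
    intro i hik
    have h0 : γ ^ 0 * (P ^ 0) i k = 0 := by simp [Matrix.one_apply, hik]
    rw [hv]
    simp only
    rw [Summable.tsum_eq_zero_add (hsum i), h0, zero_add]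
    have h2 : ∀ t : ℕ, γ ^ (t + 1) * (P ^ (t + 1)) i k
        = γ * ∑ j, P i j * (γ ^ t * (P ^ t) j k) := by
      intro t
      rw [pow_succ' P t, Matrix.mul_apply, Finset.mul_sum, Finset.mul_sum]
      exact Finset.sum_congr rfl fun j _ => by ring
    rw [tsum_congr h2, tsum_mul_left]
    congr 1
    rw [Summable.tsum_finsetSum (fun j _ => ((hsum j).mul_left (P i j)))]
    exact Finset.sum_congr rfl fun j _ => tsum_mul_left
  have hbound : ∀ i, (∀ j, v j ≤ v i) → i ≠ k → v i ≤ γ * v i := by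
    intro i hmaxi hik
    calc v i = γ * ∑ j, P i j * v j := hrec i hik
      _ ≤ γ * v i := by
        apply mul_le_mul_of_nonneg_left _ hγ0
        calc ∑ j, P i j * v j ≤ ∑ j, P i j * v i :=
              Finset.sum_le_sum fun j _ => mul_le_mul_of_nonneg_left (hmaxi j) (hPnn i j)
          _ = (∑ j, P i j) * v i := (Finset.sum_mul _ _ _).symm
          _ ≤ 1 * v i := mul_le_mul_of_nonneg_right (hProw i) (hvnn i)
          _ = v i := one_mul _
  have : Nonempty (Fin n) := ⟨k⟩
  obtain ⟨i₀, -, hmax⟩ := Finset.exists_max_image Finset.univ v Finset.univ_nonempty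
  have hik0 : i₀ = k := by
    by_contra h
    have h1 := hbound i₀ (fun j => hmax j (Finset.mem_univ j)) h
    have h2 := hmax k (Finset.mem_univ k)
    nlinarith
  have hvkmax : ∀ j, v j ≤ v k := hik0 ▸ fun j => hmax j (Finset.mem_univ j)
  have hlt : ∀ i, i ≠ k → v i < v k := by
    intro i hik
    calc v i = γ * ∑ j, P i j * v j := hrec i hik
      _ ≤ γ * v k := by
          apply mul_le_mul_of_nonneg_left _ hγ0
          calc ∑ j, P i j * v j ≤ ∑ j, P i j * v k :=
                Finset.sum_le_sum fun j _ => mul_le_mul_of_nonneg_left (hvkmax j) (hPnn i j)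
            _ = (∑ j, P i j) * v k := (Finset.sum_mul _ _ _).symm
            _ ≤ 1 * v k := mul_le_mul_of_nonneg_right (hProw i) (hvnn k)
            _ = v k := one_mul _
      _ < v k := mul_lt_of_lt_one_left (lt_of_lt_of_le one_pos hvk1) hγ1
  obtain ⟨i₁, hi₁k, hp0⟩ : ∃ i, i ≠ k ∧ 0 < p i := by
    by_contra h
    push_neg at h
    apply hpe
    funext j
    by_cases hj : j = k
    · subst hj
      have hz : ∀ i ∈ Finset.univ, i ≠ j → p i = 0 := fun i _ hi =>
        le_antisymm (h i hi) (hpnn i)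
      have : ∑ i, p i = p j := Finset.sum_eq_single j hz (fun hj' => absurd (Finset.mem_univ j) hj')
      simp [← this, hpsum]
    · have : p j = 0 := le_antisymm (h j hj) (hpnn j)
      simp [hj, this]
  rw [hL, hR]
  calc ∑ i, p i * v i < ∑ i, p i * v k :=
        Finset.sum_lt_sum (fun i _ => mul_le_mul_of_nonneg_left (hvkmax i) (hpnn i))
          ⟨i₁, Finset.mem_univ _, mul_lt_mul_of_pos_left (hlt i₁ hi₁k) hp0⟩
    _ = (∑ i, p i) * v k := (Finset.sum_mul _ _ _).symm
    _ = v k := by rw [hpsum, one_mul]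
end

section
/- Let n ≥ 1, let P be an n×n real sub-stochastic matrix, let γ ∈ [0,1), let k ∈ {1,…,n}, and let e ∈ ℝⁿ be the standard basis vector with e_k = 1. If h ∈ ℝⁿ satisfies h = e + γ P h, then h_k > h_j for every j ≠ k; in particular the maximum entry of h is attained only at index k. -/
open Matrix

/-- If `h = e + γ P h` with `P` sub-stochastic, `γ ∈ [0,1)` and `e` the standard basis
vector at `k`, then `h k > h j` for every `j ≠ k`. -/
theorem stmt_1 (n : ℕ) (hn : 1 ≤ n) (P : Matrix (Fin n) (Fin n) ℝ)
    (hPnn : ∀ i j, 0 ≤ P i j) (hProw : ∀ i, ∑ j, P i j ≤ 1)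
    (γ : ℝ) (hγ0 : 0 ≤ γ) (hγ1 : γ < 1) (k : Fin n)
    (e : Fin n → ℝ) (he : e = fun j => if j = k then (1 : ℝ) else 0)
    (h : Fin n → ℝ) (hh : h = e + γ • (P *ᵥ h)) :
    ∀ j : Fin n, j ≠ k → h j < h k := by
  haveI : Nonempty (Fin n) := Fin.pos_iff_nonempty.mp hn
  have heq : ∀ i, h i = e i + γ * ∑ j, P i j * h j := by
    intro i
    conv_lhs => rw [hh]
    simp [Matrix.mulVec, dotProduct]
  have henn : ∀ i, 0 ≤ e i := by
    intro i; rw [he]; dsimp; split <;> norm_num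
  -- Step 1: h is nonnegative
  obtain ⟨i0, -, hi0⟩ := Finset.exists_min_image Finset.univ h ⟨k, Finset.mem_univ k⟩
  have hmin : ∀ i, h i0 ≤ h i := fun i => hi0 i (Finset.mem_univ i)
  have hnn : ∀ i, 0 ≤ h i := by
    have h0 : 0 ≤ h i0 := by
      by_contra hneg
      push_neg at hneg
      have hsum : h i0 * ∑ j, P i0 j ≤ ∑ j, P i0 j * h j := by
        rw [Finset.mul_sum]
        exact Finset.sum_le_sum fun j _ => by
          rw [mul_comm]; exact mul_le_mul_of_nonneg_left (hmin j) (hPnn i0 j)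
      have h1 : h i0 ≤ h i0 * ∑ j, P i0 j := by
        nlinarith [hProw i0, Finset.sum_nonneg (fun j (_ : j ∈ Finset.univ) => hPnn i0 j)]
      have h2 : γ * h i0 ≤ γ * ∑ j, P i0 j * h j :=
        mul_le_mul_of_nonneg_left (h1.trans hsum) hγ0
      have h3 : h i0 < γ * h i0 := by nlinarith
      have := heq i0
      nlinarith [henn i0]
    exact fun i => h0.trans (hmin i)
  -- h k ≥ 1
  have hk1 : 1 ≤ h k := by
    have := heq k
    have hek : e k = 1 := by rw [he]; simp
    have hsnn : 0 ≤ ∑ j, P k j * h j :=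
      Finset.sum_nonneg fun j _ => mul_nonneg (hPnn k j) (hnn j)
    nlinarith
  -- Step 2: max is at k
  obtain ⟨i1, -, hi1⟩ := Finset.exists_max_image Finset.univ h ⟨k, Finset.mem_univ k⟩
  have hmax : ∀ i, h i ≤ h i1 := fun i => hi1 i (Finset.mem_univ i)
  have hub : ∀ i, ∑ j, P i j * h j ≤ h i1 := by
    intro i
    calc ∑ j, P i j * h j ≤ ∑ j, P i j * h i1 :=
          Finset.sum_le_sum fun j _ => mul_le_mul_of_nonneg_left (hmax j) (hPnn i j)
      _ = (∑ j, P i j) * h i1 := by rw [Finset.sum_mul]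
      _ ≤ 1 * h i1 := mul_le_mul_of_nonneg_right (hProw i) ((hnn k).trans (hmax k))
      _ = h i1 := one_mul _
  have hMk : h i1 = h k := by
    by_contra hne
    have hik : i1 ≠ k := fun hc => hne (by rw [hc])
    have hei1 : e i1 = 0 := by rw [he]; simp [hik]
    have := heq i1
    have := hub i1
    have hpos : 0 < h i1 := lt_of_lt_of_le one_pos (hk1.trans (hmax k))
    nlinarith
  intro j hj
  have hej : e j = 0 := by rw [he]; simp [hj]
  have := heq j
  have := hub j
  nlinarith [hk1, hmax k]
end

section
/- Let n ≥ 1, let P be an n×n real sub-stochastic matrix, let γ ∈ [0,1), let c ∈ ℝⁿ, and let v ∈ ℝⁿ be the unique solution of v = c + γPv. Let k ∈ {1,…,n}, let π ∈ ℝⁿ be a sub-stochastic vector, and let z ∈ ℝ satisfy v_k > z + γ πᵀv. Let P̂ be the matrix obtained from P by replacing its k-th row with πᵀ, let ĉ be the vector obtained from c by replacing its k-th entry with z, and let v̂ ∈ ℝⁿ be the unique solution of v̂ = ĉ + γ P̂ v̂. Then v̂_k < c_k + γ Σ_{j=1}^n P_{kj} v̂_j. -/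
open Matrix

/-- Single-row policy-improvement lemma: if `v = c + γPv`, `v k > z + γ πᵀ v`, and
`v̂` solves the fixed-point equation for the matrix/cost obtained by replacing row `k`
of `P` with `πᵀ` and entry `k` of `c` with `z`, then
`v̂ k < c k + γ ∑ j, P k j * v̂ j`. -/
theorem stmt_3 (n : ℕ) (hn : 1 ≤ n) (P : Matrix (Fin n) (Fin n) ℝ)
    (hPnn : ∀ i j, 0 ≤ P i j) (hProw : ∀ i, ∑ j, P i j ≤ 1)
    (γ : ℝ) (hγ0 : 0 ≤ γ) (hγ1 : γ < 1)
    (c : Fin n → ℝ) (v : Fin n → ℝ) (hv : v = c + γ • (P *ᵥ v))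
    (k : Fin n) (p : Fin n → ℝ) (hpnn : ∀ i, 0 ≤ p i) (hpsum : ∑ i, p i ≤ 1)
    (z : ℝ) (hz : z + γ * ∑ j, p j * v j < v k)
    (Phat : Matrix (Fin n) (Fin n) ℝ)
    (hPhat : ∀ i j, Phat i j = if i = k then p j else P i j)
    (chat : Fin n → ℝ) (hchat : ∀ i, chat i = if i = k then z else c i)
    (vhat : Fin n → ℝ) (hvhat : vhat = chat + γ • (Phat *ᵥ vhat)) :
    vhat k < c k + γ * ∑ j, P k j * vhat j := by
  have hv' : ∀ i, v i = c i + γ * ∑ j, P i j * v j := by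
    intro i
    have := congrFun hv i
    simpa [Matrix.mulVec, dotProduct] using this
  have hvhat' : ∀ i, vhat i = chat i + γ * ∑ j, Phat i j * vhat j := by
    intro i
    have := congrFun hvhat i
    simpa [Matrix.mulVec, dotProduct] using this
  set d : Fin n → ℝ := fun i => v i - vhat i with hd_def
  set ε : ℝ := v k - (z + γ * ∑ j, p j * v j) with hε_def
  have hε : 0 < ε := by rw [hε_def]; linarith
  have h1 : ∀ i, i ≠ k → d i = γ * ∑ j, P i j * d j := by
    intro i hik
    have e1 := hv' i
    have e2 := hvhat' i
    rw [hchat i, if_neg hik] at e2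
    have e3 : ∑ j, Phat i j * vhat j = ∑ j, P i j * vhat j := by
      refine Finset.sum_congr rfl fun j _ => ?_
      rw [hPhat, if_neg hik]
    rw [e3] at e2
    have e4 : ∑ j, P i j * d j = ∑ j, P i j * v j - ∑ j, P i j * vhat j := by
      simp [hd_def, mul_sub, Finset.sum_sub_distrib]
    show v i - vhat i = γ * ∑ j, P i j * d j
    rw [e4, mul_sub]; linarith
  have h2 : d k = ε + γ * ∑ j, p j * d j := by
    have e1 := hv' k
    have e2 := hvhat' k
    rw [hchat k, if_pos rfl] at e2
    have e3 : ∑ j, Phat k j * vhat j = ∑ j, p j * vhat j := by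
      refine Finset.sum_congr rfl fun j _ => ?_
      rw [hPhat, if_pos rfl]
    rw [e3] at e2
    have e4 : ∑ j, p j * d j = ∑ j, p j * v j - ∑ j, p j * vhat j := by
      simp [hd_def, mul_sub, Finset.sum_sub_distrib]
    show v k - vhat k = ε + γ * ∑ j, p j * d j
    rw [e4, mul_sub, hε_def]; linarith
  -- nonnegativity of d
  have hdnn : ∀ j, 0 ≤ d j := by
    obtain ⟨i0, -, hi0⟩ := Finset.exists_min_image Finset.univ d ⟨k, Finset.mem_univ k⟩
    have hmin : ∀ j, d i0 ≤ d j := fun j => hi0 j (Finset.mem_univ j)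
    suffices h : 0 ≤ d i0 by intro j; exact le_trans h (hmin j)
    rcases le_or_gt 0 (d i0) with h | h
    · exact h
    · exfalso
      have key : ∀ (w : Fin n → ℝ), (∀ j, 0 ≤ w j) → (∑ j, w j) ≤ 1 →
          d i0 ≤ ∑ j, w j * d j := by
        intro w hw hws
        calc d i0 ≤ (∑ j, w j) * d i0 := by nlinarith
          _ = ∑ j, w j * d i0 := by rw [Finset.sum_mul]
          _ ≤ ∑ j, w j * d j :=
            Finset.sum_le_sum fun j _ => mul_le_mul_of_nonneg_left (hmin j) (hw j)
      by_cases hik : i0 = k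
      · have hk := key p hpnn hpsum
        rw [hik] at hk h
        nlinarith [mul_le_mul_of_nonneg_left hk hγ0]
      · have hk := key (P i0) (hPnn i0) (hProw i0)
        have e := h1 i0 hik
        nlinarith [mul_le_mul_of_nonneg_left hk hγ0]
  have hpd : 0 ≤ ∑ j, p j * d j :=
    Finset.sum_nonneg fun j _ => mul_nonneg (hpnn j) (hdnn j)
  have hdkpos : 0 < d k := by rw [h2]; nlinarith
  -- max of d is attained at k
  have hmaxk : ∀ j, d j ≤ d k := by
    obtain ⟨j0, -, hj0⟩ := Finset.exists_max_image Finset.univ d ⟨k, Finset.mem_univ k⟩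
    have hmax : ∀ j, d j ≤ d j0 := fun j => hj0 j (Finset.mem_univ j)
    by_cases hjk : j0 = k
    · intro j; rw [← hjk]; exact hmax j
    · exfalso
      have e := h1 j0 hjk
      have hs : ∑ j, P j0 j * d j ≤ (∑ j, P j0 j) * d j0 := by
        rw [Finset.sum_mul]
        exact Finset.sum_le_sum fun j _ => mul_le_mul_of_nonneg_left (hmax j) (hPnn j0 j)
      have h3 : γ * ((1 - ∑ j, P j0 j) * d j0) ≥ 0 :=
        mul_nonneg hγ0 (mul_nonneg (by linarith [hProw j0]) (hdnn j0))
      nlinarith [mul_le_mul_of_nonneg_left hs hγ0, hmax k]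
  -- conclude
  have hsum : ∑ j, P k j * d j ≤ (∑ j, P k j) * d k := by
    rw [Finset.sum_mul]
    exact Finset.sum_le_sum fun j _ => mul_le_mul_of_nonneg_left (hmaxk j) (hPnn k j)
  have hdsum : ∑ j, P k j * vhat j = ∑ j, P k j * v j - ∑ j, P k j * d j := by
    simp [hd_def, mul_sub, Finset.sum_sub_distrib]
  have hvk : vhat k = v k - d k := by simp [hd_def]
  rw [hdsum, mul_sub, hvk]
  have h3 : γ * ((1 - ∑ j, P k j) * d k) ≥ 0 :=
    mul_nonneg hγ0 (mul_nonneg (by linarith [hProw k]) (hdnn k))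
  nlinarith [hv' k, mul_le_mul_of_nonneg_left hsum hγ0,
    mul_pos (by linarith : (0:ℝ) < 1 - γ) hdkpos]
end

section
/- Let n ≥ 1, let P be an n×n real sub-stochastic matrix, let γ ∈ [0,1), let k ∈ {1,…,n}, let e ∈ ℝⁿ be the standard basis vector with e_k = 1, and let π ∈ ℝⁿ be a sub-stochastic vector. Let g ∈ ℝⁿ be the unique solution of (I − γP)ᵀ g = e − γπ. Then g_k > 0. -/
open Matrix

/-- If `g` solves `(I - γP)ᵀ g = e - γπ` with `P` sub-stochastic, `π` a sub-stochastic
vector, and `e` the standard basis vector at `k`, then `g k > 0`. -/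
theorem stmt_4 (n : ℕ) (hn : 1 ≤ n) (P : Matrix (Fin n) (Fin n) ℝ)
    (hPnn : ∀ i j, 0 ≤ P i j) (hProw : ∀ i, ∑ j, P i j ≤ 1)
    (γ : ℝ) (hγ0 : 0 ≤ γ) (hγ1 : γ < 1) (k : Fin n)
    (e : Fin n → ℝ) (he : e = fun j => if j = k then (1 : ℝ) else 0)
    (p : Fin n → ℝ) (hpnn : ∀ i, 0 ≤ p i) (hpsum : ∑ i, p i ≤ 1)
    (g : Fin n → ℝ) (hg : (1 - γ • P)ᵀ *ᵥ g = e - γ • p) :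
    0 < g k := by
  haveI : NeZero n := ⟨(Nat.pos_of_ne_zero (by omega)).ne'⟩
  set A : Matrix (Fin n) (Fin n) ℝ := 1 - γ • P with hA
  -- A is injective as a linear map
  have hinj : Function.Injective A.mulVecLin := by
    rw [← LinearMap.ker_eq_bot, LinearMap.ker_eq_bot']
    intro x hx
    have hx' : ∀ i, x i = γ * ∑ j, P i j * x j := by
      intro i
      have h := congrFun hx i
      simp only [A, Matrix.mulVecLin_apply, Matrix.mulVec, dotProduct,
        Matrix.sub_apply, Matrix.smul_apply, Matrix.one_apply, smul_eq_mul, sub_mul,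
        Finset.sum_sub_distrib, ite_mul, one_mul, zero_mul, Finset.sum_ite_eq,
        Finset.mem_univ, if_true, mul_assoc, ← Finset.mul_sum, Pi.zero_apply] at h
      linarith
    obtain ⟨i, hi⟩ := Finite.exists_max fun i => |x i|
    have h1 : |x i| ≤ γ * |x i| := by
      calc |x i| = γ * |∑ j, P i j * x j| := by
            rw [hx' i, abs_mul, abs_of_nonneg hγ0]
        _ ≤ γ * ∑ j, P i j * |x i| := by
            apply mul_le_mul_of_nonneg_left _ hγ0
            calc |∑ j, P i j * x j| ≤ ∑ j, |P i j * x j| := Finset.abs_sum_le_sum_abs _ _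
              _ ≤ ∑ j, P i j * |x i| := by
                  apply Finset.sum_le_sum
                  intro j _
                  rw [abs_mul, abs_of_nonneg (hPnn i j)]
                  exact mul_le_mul_of_nonneg_left (hi j) (hPnn i j)
        _ = γ * ((∑ j, P i j) * |x i|) := by rw [← Finset.sum_mul]
        _ ≤ γ * (1 * |x i|) := by
            apply mul_le_mul_of_nonneg_left _ hγ0
            exact mul_le_mul_of_nonneg_right (hProw i) (abs_nonneg _)
        _ = γ * |x i| := by ring
    have hxi0 : |x i| ≤ 0 := by nlinarith [abs_nonneg (x i)]
    funext j
    have : |x j| ≤ 0 := le_trans (hi j) hxi0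
    simpa using le_antisymm this (abs_nonneg _)
  obtain ⟨v, hv⟩ := (LinearMap.injective_iff_surjective).mp hinj e
  have hv' : ∀ i, v i = e i + γ * ∑ j, P i j * v j := by
    intro i
    have h := congrFun hv i
    simp only [A, Matrix.mulVecLin_apply, Matrix.mulVec, dotProduct,
      Matrix.sub_apply, Matrix.smul_apply, Matrix.one_apply, smul_eq_mul, sub_mul,
      Finset.sum_sub_distrib, ite_mul, one_mul, zero_mul, Finset.sum_ite_eq,
      Finset.mem_univ, if_true, mul_assoc, ← Finset.mul_sum] at h
    linarith
  have henn : ∀ i, 0 ≤ e i := by intro i; rw [he]; dsimp; split <;> norm_num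
  -- v is nonnegative (minimum principle)
  have hvnn : ∀ i, 0 ≤ v i := by
    obtain ⟨i0, hi0⟩ := Finite.exists_min v
    intro i
    refine le_trans ?_ (hi0 i)
    by_contra hneg
    push_neg at hneg
    have hS : v i0 ≤ ∑ j, P i0 j * v j := by
      calc v i0 = 1 * v i0 := (one_mul _).symm
        _ ≤ (∑ j, P i0 j) * v i0 := by
            exact mul_le_mul_of_nonpos_right (hProw i0) hneg.le
        _ = ∑ j, P i0 j * v i0 := Finset.sum_mul _ _ _
        _ ≤ ∑ j, P i0 j * v j := by
            apply Finset.sum_le_sum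
            intro j _
            exact mul_le_mul_of_nonneg_left (hi0 j) (hPnn i0 j)
    have h2 : γ * v i0 ≤ γ * ∑ j, P i0 j * v j := mul_le_mul_of_nonneg_left hS hγ0
    have h3 := hv' i0
    have h4 := henn i0
    nlinarith
  -- v k ≥ 1
  have hvk1 : 1 ≤ v k := by
    have hek : e k = 1 := by rw [he]; simp
    have hs : 0 ≤ ∑ j, P k j * v j :=
      Finset.sum_nonneg fun j _ => mul_nonneg (hPnn k j) (hvnn j)
    have := hv' k
    nlinarith
  -- maximum principle: v i ≤ v k
  have hmax : ∀ i, v i ≤ v k := by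
    obtain ⟨i, hi⟩ := Finite.exists_max v
    intro j
    refine le_trans (hi j) ?_
    by_contra hlt
    push_neg at hlt
    have hik : i ≠ k := by rintro rfl; exact absurd rfl hlt.ne'
    have hei : e i = 0 := by rw [he]; simp [hik]
    have hS : ∑ j, P i j * v j ≤ v i := by
      calc ∑ j, P i j * v j ≤ ∑ j, P i j * v i := by
            apply Finset.sum_le_sum
            intro j _
            exact mul_le_mul_of_nonneg_left (hi j) (hPnn i j)
        _ = (∑ j, P i j) * v i := (Finset.sum_mul _ _ _).symm
        _ ≤ 1 * v i := by
            apply mul_le_mul_of_nonneg_right (hProw i)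
            exact le_trans (le_trans zero_le_one hvk1) (hi k)
        _ = v i := one_mul _
    have h3 := hv' i
    have hvi1 : 1 ≤ v i := le_trans hvk1 (hi k)
    nlinarith [mul_le_mul_of_nonneg_left hS hγ0]
  -- key identity: g k = (e - γ • p) ⬝ᵥ v
  have hkey : g k = ∑ i, (e i - γ * p i) * v i := by
    have h1 : g ⬝ᵥ e = g k := by
      rw [he]
      simp [dotProduct]
    have h2 : g ⬝ᵥ (A *ᵥ v) = (Aᵀ *ᵥ g) ⬝ᵥ v := by
      rw [Matrix.dotProduct_mulVec, Matrix.mulVec_transpose]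
    have hAv : A *ᵥ v = e := by
      funext i; exact congrFun hv i
    rw [hAv] at h2
    rw [hg] at h2
    rw [← h1, h2]
    simp [dotProduct, sub_mul]
  have hsum : ∑ i, p i * v i ≤ v k := by
    calc ∑ i, p i * v i ≤ ∑ i, p i * v k := by
          apply Finset.sum_le_sum
          intro i _
          exact mul_le_mul_of_nonneg_left (hmax i) (hpnn i)
      _ = (∑ i, p i) * v k := (Finset.sum_mul _ _ _).symm
      _ ≤ 1 * v k := mul_le_mul_of_nonneg_right hpsum (hvnn k)
      _ = v k := one_mul _
  have hev : ∑ i, e i * v i = v k := by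
    rw [he]
    simp [Finset.sum_ite_eq']
  have : g k = v k - γ * ∑ i, p i * v i := by
    rw [hkey, ← hev, Finset.mul_sum, ← Finset.sum_sub_distrib]
    exact Finset.sum_congr rfl fun i _ => by ring
  nlinarith [mul_le_mul_of_nonneg_left hsum hγ0]
end

section
/- Let S be a finite state set, let γ ∈ [0,1), let G ⊊ S be a proper subset with complement Ḡ = S \ G, and for each i ∈ G let p^{(i)} ∈ ℝ^S be a stochastic vector. Let P_{H,G} be the G×G matrix with entries p^{(i)}_j for i,j ∈ G, and P_{H,Ḡ} the G×Ḡ matrix with entries p^{(i)}_j for i ∈ G, j ∈ Ḡ. Define v̂ ∈ ℝ^S by v̂_j = 1 for j ∈ Ḡ and v̂_G = γ (I − γ P_{H,G})^{-1} P_{H,Ḡ} 𝟏, where 𝟏 ∈ ℝ^Ḡ is the all-ones vector. Then (a) v̂_i = γ Σ_{j∈S} p^{(i)}_j v̂_j for every i ∈ G, and (b) v̂_i ≤ 1 for every i ∈ S. -/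
open Matrix

/-- Feasibility of the optimal DRP solution: with `v̂ = 1` on `Ḡ` and
`v̂_G = γ (I - γ P_{H,G})⁻¹ P_{H,Ḡ} 𝟏`, we have
(a) `v̂ i = γ ∑ j, p i j * v̂ j` for `i ∈ G`, and (b) `v̂ ≤ 1` everywhere. -/
theorem stmt_6 {S : Type*} [Fintype S] [DecidableEq S]
    (γ : ℝ) (hγ0 : 0 ≤ γ) (hγ1 : γ < 1)
    (G : Finset S) (hG : G ≠ Finset.univ)
    (p : S → S → ℝ)
    (hpnn : ∀ i ∈ G, ∀ j, 0 ≤ p i j) (hpsum : ∀ i ∈ G, ∑ j, p i j = 1)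
    (PHG : Matrix G G ℝ) (hPHG : ∀ i j : G, PHG i j = p i j)
    (PHB : Matrix G (Gᶜ : Finset S) ℝ)
    (hPHB : ∀ (i : G) (j : (Gᶜ : Finset S)), PHB i j = p i j)
    (v : S → ℝ)
    (hvout : ∀ j ∉ G, v j = 1)
    (hvin : ∀ i : G, v i = (γ • (((1 - γ • PHG)⁻¹ * PHB) *ᵥ fun _ => (1 : ℝ))) i) :
    (∀ i ∈ G, v i = γ * ∑ j, p i j * v j) ∧ (∀ i, v i ≤ 1) := by
  set A : Matrix G G ℝ := 1 - γ • PHG with hA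
  -- basic facts about p on G
  have hsumG : ∀ k : G, ∑ j : G, p k j ≤ 1 := by
    intro k
    rw [Finset.sum_coe_sort G (fun j => p k j)]
    calc ∑ j ∈ G, p (k : S) j ≤ ∑ j, p (k : S) j :=
          Finset.sum_le_sum_of_subset_of_nonneg (Finset.subset_univ G)
            (fun j _ _ => hpnn k k.2 j)
      _ = 1 := hpsum k k.2
  have hpkk : ∀ k : G, p k k ≤ 1 := by
    intro k
    calc p (k : S) k = ∑ j ∈ {(k : S)}, p (k : S) j := by simp
      _ ≤ ∑ j, p (k : S) j := Finset.sum_le_sum_of_subset_of_nonneg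
            (Finset.subset_univ _) (fun j _ _ => hpnn k k.2 j)
      _ = 1 := hpsum k k.2
  -- A is invertible by strict diagonal dominance
  have hdet : A.det ≠ 0 := by
    apply det_ne_zero_of_sum_row_lt_diag
    intro k
    have hdiag : A k k = 1 - γ * p k k := by
      simp [hA, Matrix.sub_apply, Matrix.one_apply_eq, Matrix.smul_apply, hPHG,
        smul_eq_mul]
    have hoff : ∀ j : G, j ≠ k → ‖A k j‖ = γ * p k j := by
      intro j hj
      have : A k j = -(γ * p k j) := by
        simp [hA, Matrix.sub_apply, Matrix.one_apply_ne' hj, Matrix.smul_apply, hPHG,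
          smul_eq_mul]
      rw [this, norm_neg, Real.norm_eq_abs,
        abs_of_nonneg (mul_nonneg hγ0 (hpnn k k.2 j))]
    have h1 : ∑ j ∈ Finset.univ.erase k, ‖A k j‖ = γ * ∑ j ∈ Finset.univ.erase k, p k j := by
      rw [Finset.mul_sum]
      exact Finset.sum_congr rfl fun j hj => hoff j (Finset.ne_of_mem_erase hj)
    have h2 : ∑ j ∈ Finset.univ.erase k, p (k : S) (j : S) = (∑ j : G, p k j) - p k k := by
      rw [← Finset.sum_erase_add Finset.univ _ (Finset.mem_univ k)]; ring
    have hγpkk : γ * p k k ≤ 1 := by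
      calc γ * p k k ≤ 1 * 1 :=
            mul_le_mul (le_of_lt hγ1) (hpkk k) (hpnn k k.2 k) zero_le_one
        _ = 1 := one_mul 1
    have hAkk : ‖A k k‖ = 1 - γ * p k k := by
      rw [hdiag, Real.norm_eq_abs, abs_of_nonneg (by linarith)]
    rw [h1, h2, hAkk]
    have hle : ∑ j : G, p k j - p k k ≤ 1 - p k k := by
      have := hsumG k; linarith
    have : γ * ((∑ j : G, p k j) - p k k) ≤ γ * (1 - p k k) :=
      mul_le_mul_of_nonneg_left hle hγ0
    nlinarith [hpnn k k.2 (k : S)]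
  have hAunit : IsUnit A.det := isUnit_iff_ne_zero.mpr hdet
  set w : G → ℝ := ((1 - γ • PHG)⁻¹ * PHB) *ᵥ fun _ => (1 : ℝ) with hw
  have hAw : A *ᵥ w = PHB *ᵥ fun _ => (1 : ℝ) := by
    rw [hw, Matrix.mulVec_mulVec, ← Matrix.mul_assoc, ← hA,
      Matrix.mul_nonsing_inv A hAunit, Matrix.one_mul]
  -- part (a)
  have parta : ∀ i ∈ G, v i = γ * ∑ j, p i j * v j := by
    intro i hi
    set i' : G := ⟨i, hi⟩ with hi'
    have hvi : v i = γ * w i' := by rw [hvin i']; simp [hw]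
    have hsplit : ∑ j, p i j * v j = ∑ j ∈ G, p i j * v j + ∑ j ∈ Gᶜ, p i j * v j :=
      (Finset.sum_add_sum_compl G _).symm
    have hGpart : ∑ j ∈ G, p i j * v j = γ * ∑ j : G, p i j * w j := by
      rw [← Finset.sum_coe_sort G (fun j => p i j * v j), Finset.mul_sum]
      refine Finset.sum_congr rfl fun j _ => ?_
      rw [hvin j]; simp [hw]; ring
    have hBpart : ∑ j ∈ Gᶜ, p i j * v j = ∑ j : (Gᶜ : Finset S), p i j := by
      rw [← Finset.sum_coe_sort (Gᶜ : Finset S) (fun j => p i j * v j)]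
      refine Finset.sum_congr rfl fun j _ => ?_
      rw [hvout j (Finset.mem_compl.mp j.2), mul_one]
    have hcomp : w i' - γ * ∑ j : G, p i j * w j = ∑ j : (Gᶜ : Finset S), p i j := by
      have h1 := congrFun hAw i'
      simp only [Matrix.mulVec, dotProduct, hA, Matrix.sub_apply,
        Matrix.smul_apply, hPHG, hPHB, smul_eq_mul, sub_mul, mul_one] at h1
      rw [Finset.sum_sub_distrib] at h1
      have hone : ∑ j : G, (1 : Matrix G G ℝ) i' j * w j = w i' := by
        simp [Matrix.one_apply]
      rw [hone] at h1
      rw [← h1, Finset.mul_sum]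
      congr 1
      refine Finset.sum_congr rfl fun j _ => ?_
      ring
    rw [hvi, hsplit, hGpart, hBpart, ← hcomp]
    ring
  refine ⟨parta, ?_⟩
  -- part (b) via a maximum principle
  have hmax : ∃ i₀, ∀ j, v j ≤ v i₀ := by
    obtain ⟨x, -⟩ : ∃ x, x ∉ G := by
      by_contra h; push_neg at h
      exact hG (Finset.eq_univ_iff_forall.mpr h)
    obtain ⟨i₀, -, h⟩ := Finset.exists_max_image Finset.univ v ⟨x, Finset.mem_univ x⟩
    exact ⟨i₀, fun j => h j (Finset.mem_univ j)⟩
  obtain ⟨i₀, hi₀⟩ := hmax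
  have hv1 : v i₀ ≤ 1 := by
    by_cases hmem : i₀ ∈ G
    · by_contra hgt
      push_neg at hgt
      have heq := parta i₀ hmem
      have hsle : ∑ j, p i₀ j * v j ≤ ∑ j, p i₀ j * v i₀ :=
        Finset.sum_le_sum fun j (_ : j ∈ Finset.univ) =>
          mul_le_mul_of_nonneg_left (hi₀ j) (hpnn i₀ hmem j)
      have hsum : ∑ j, p i₀ j * v i₀ = v i₀ := by
        rw [← Finset.sum_mul, hpsum i₀ hmem, one_mul]
      have hkey : γ * ∑ j, p i₀ j * v j ≤ γ * v i₀ :=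
        mul_le_mul_of_nonneg_left (le_of_le_of_eq hsle hsum) hγ0
      nlinarith
    · rw [hvout i₀ hmem]
  exact fun i => le_trans (hi₀ i) hv1
end

section
/- Let S be a finite state set, let γ ∈ [0,1), let G ⊊ S be a proper subset with complement Ḡ = S \ G, and for each i ∈ G let p^{(i)} ∈ ℝ^S be a stochastic vector. Let P_{H,G} and P_{H,Ḡ} be the corresponding G×G and G×Ḡ submatrices, and set v̂_G = γ (I − γ P_{H,G})^{-1} P_{H,Ḡ} 𝟏. If ŵ ∈ ℝ^S satisfies ŵ_j ≤ 1 for every j ∈ Ḡ and ŵ_i ≤ γ Σ_{j∈S} p^{(i)}_j ŵ_j for every i ∈ G, then ŵ_i ≤ (v̂_G)_i for every i ∈ G. -/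
open Matrix

section Aux

attribute [local instance] Matrix.linftyOpNormedRing Matrix.linftyOpNormedAlgebra

lemma aux_inv {n : Type*} [Fintype n] [DecidableEq n] (M : Matrix n n ℝ)
    (hnn : ∀ i j, 0 ≤ M i j) (c : ℝ) (hc : c < 1) (hrow : ∀ i, ∑ j, M i j ≤ c) :
    ∃ N : Matrix n n ℝ, (∀ i j, 0 ≤ N i j) ∧ N * (1 - M) = 1 ∧ (1 - M) * N = 1 := by
  by_cases hn : Nonempty n
  · have hnorm : ‖M‖ < 1 := by
      rw [Matrix.linfty_opNorm_def]
      rw [show (1:ℝ) = ((1:NNReal):ℝ) by norm_num, NNReal.coe_lt_coe]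
      rw [Finset.sup_lt_iff (by norm_num)]
      intro i _
      have : ((∑ j, ‖M i j‖₊ : NNReal) : ℝ) < 1 := by
        push_cast
        have : ∑ j, ‖M i j‖ = ∑ j, M i j := by
          refine Finset.sum_congr rfl fun j _ => ?_
          rw [Real.norm_eq_abs, abs_of_nonneg (hnn i j)]
        calc ∑ j, ‖M i j‖ = ∑ j, M i j := this
          _ ≤ c := hrow i
          _ < 1 := hc
      exact_mod_cast this
    have hsum : Summable (fun k : ℕ => M ^ k) := summable_geometric_of_norm_lt_one hnorm
    refine ⟨∑' k, M ^ k, ?_, geom_series_mul_neg M hnorm, mul_neg_geom_series M hnorm⟩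
    intro i j
    have hpow : ∀ k, 0 ≤ (M ^ k) i j := by
      intro k
      induction k generalizing i j with
      | zero => by_cases h : i = j <;> simp [pow_zero, Matrix.one_apply, h]
      | succ m ih =>
        rw [pow_succ, Matrix.mul_apply]
        exact Finset.sum_nonneg fun l _ => mul_nonneg (ih i l) (hnn l j)
    -- evaluation as a continuous additive monoid hom
    let φ : Matrix n n ℝ →+ ℝ :=
      { toFun := fun A => A i j, map_zero' := rfl, map_add' := fun _ _ => rfl }
    have hφ : Continuous φ := by
      refine AddMonoidHomClass.continuous_of_bound φ 1 fun A => ?_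
      rw [one_mul]
      calc ‖A i j‖ ≤ ∑ l, ‖A i l‖ :=
            Finset.single_le_sum (fun l _ => norm_nonneg _) (Finset.mem_univ j)
        _ ≤ ‖A‖ := by
            rw [Matrix.linfty_opNorm_def]
            have : (∑ l, ‖A i l‖₊ : NNReal) ≤ (Finset.univ.sup fun i => ∑ l, ‖A i l‖₊) :=
              Finset.le_sup (f := fun i => ∑ l, ‖A i l‖₊) (Finset.mem_univ i)
            calc ∑ l, ‖A i l‖ = ((∑ l, ‖A i l‖₊ : NNReal) : ℝ) := by push_cast; rfl
              _ ≤ _ := by exact_mod_cast this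
    have h2 : HasSum (fun k => (M ^ k) i j) ((∑' k, M ^ k) i j) := hsum.hasSum.map φ hφ
    exact hasSum_le (fun k => hpow k) hasSum_zero h2
  · refine ⟨1, fun i j => absurd ⟨i⟩ hn, ?_, ?_⟩ <;>
    · ext i j; exact absurd ⟨i⟩ hn

end Aux

/-- Dominance of the optimal DRP solution on `G`: any `ŵ` with `ŵ ≤ 1` off `G` and
`ŵ i ≤ γ ∑ j, p i j * ŵ j` on `G` satisfies `ŵ_G ≤ γ (I - γ P_{H,G})⁻¹ P_{H,Ḡ} 𝟏`. -/
theorem stmt_7 {S : Type*} [Fintype S] [DecidableEq S]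
    (γ : ℝ) (hγ0 : 0 ≤ γ) (hγ1 : γ < 1)
    (G : Finset S) (hG : G ≠ Finset.univ)
    (p : S → S → ℝ)
    (hpnn : ∀ i ∈ G, ∀ j, 0 ≤ p i j) (hpsum : ∀ i ∈ G, ∑ j, p i j = 1)
    (PHG : Matrix G G ℝ) (hPHG : ∀ i j : G, PHG i j = p i j)
    (PHB : Matrix G (Gᶜ : Finset S) ℝ)
    (hPHB : ∀ (i : G) (j : (Gᶜ : Finset S)), PHB i j = p i j)
    (vG : G → ℝ)
    (hvG : vG = γ • (((1 - γ • PHG)⁻¹ * PHB) *ᵥ fun _ => (1 : ℝ)))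
    (w : S → ℝ)
    (hwout : ∀ j ∉ G, w j ≤ 1)
    (hwin : ∀ i ∈ G, w i ≤ γ * ∑ j, p i j * w j) :
    ∀ i : G, w i ≤ vG i := by
  set M : Matrix G G ℝ := γ • PHG with hM
  have hMnn : ∀ i j : G, 0 ≤ M i j := by
    intro i j
    have : M i j = γ * p i j := by simp [hM, hPHG]
    rw [this]
    exact mul_nonneg hγ0 (hpnn i i.2 j)
  have hrow : ∀ i : G, ∑ j, M i j ≤ γ := by
    intro i
    have h1 : ∑ j : G, M i j = γ * ∑ j : G, p i (j : S) := by
      rw [Finset.mul_sum]; exact Finset.sum_congr rfl fun j _ => by simp [hM, hPHG]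
    have h2 : ∑ j : G, p i (j : S) = ∑ j ∈ G, p i j := Finset.sum_coe_sort G _
    have h3 : ∑ j ∈ G, p i j ≤ ∑ j, p i j :=
      Finset.sum_le_sum_of_subset_of_nonneg (Finset.subset_univ G)
        (fun j _ _ => hpnn i i.2 j)
    rw [h1, h2]
    calc γ * ∑ j ∈ G, p i j ≤ γ * 1 := by
          apply mul_le_mul_of_nonneg_left _ hγ0
          rw [← hpsum i i.2]; exact h3
      _ = γ := mul_one γ
  obtain ⟨N, hNnn, hN1, hN2⟩ := aux_inv M hMnn γ hγ1 hrow
  have hInv : (1 - M)⁻¹ = N := Matrix.inv_eq_left_inv hN1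
  set x : G → ℝ := fun i => w i with hx
  set e : G → ℝ := γ • (PHB *ᵥ fun _ => (1:ℝ)) with he
  have key : ∀ i : G, ((1 - M) *ᵥ x) i ≤ e i := by
    intro i
    have hsplit : ∑ j, p i j * w j = ∑ j ∈ G, p i j * w j + ∑ j ∈ Gᶜ, p i j * w j :=
      (Finset.sum_add_sum_compl G _).symm
    have hcomp : ∑ j ∈ Gᶜ, p i j * w j ≤ ∑ j ∈ Gᶜ, p i j := by
      refine Finset.sum_le_sum fun j hj => ?_
      have hj' : j ∉ G := Finset.mem_compl.mp hj
      calc p (i:S) j * w j ≤ p i j * 1 :=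
            mul_le_mul_of_nonneg_left (hwout j hj') (hpnn i i.2 j)
        _ = p i j := mul_one _
    have hMx : (M *ᵥ x) i = γ * ∑ j ∈ G, p i j * w j := by
      rw [Matrix.mulVec, dotProduct]
      rw [← Finset.sum_coe_sort G (fun j => p i j * w j), Finset.mul_sum]
      exact Finset.sum_congr rfl fun j _ => by simp [hM, hPHG]; ring
    have hei : e i = γ * ∑ j ∈ Gᶜ, p i j := by
      rw [he]
      simp only [Pi.smul_apply, smul_eq_mul]
      congr 1
      rw [Matrix.mulVec, dotProduct,
        ← Finset.sum_coe_sort (Gᶜ) (fun j => p i j)]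
      exact Finset.sum_congr rfl fun j _ => by simp [hPHB]
    have hlhs : ((1 - M) *ᵥ x) i = w i - (M *ᵥ x) i := by
      simp [Matrix.sub_mulVec, Matrix.one_mulVec, hx]
    rw [hlhs, hMx, hei]
    have := hwin i i.2
    rw [hsplit, mul_add] at this
    have h4 : γ * ∑ j ∈ Gᶜ, p i j * w j ≤ γ * ∑ j ∈ Gᶜ, p i j :=
      mul_le_mul_of_nonneg_left hcomp hγ0
    linarith
  have hxeq : x = N *ᵥ ((1 - M) *ᵥ x) := by
    rw [Matrix.mulVec_mulVec, hN1, Matrix.one_mulVec]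
  have hvG' : vG = N *ᵥ e := by
    rw [hvG, hInv, ← Matrix.mulVec_mulVec, he, Matrix.mulVec_smul]
  intro i
  have : x i ≤ (N *ᵥ e) i := by
    conv_lhs => rw [hxeq]
    rw [Matrix.mulVec, Matrix.mulVec, dotProduct, dotProduct]
    exact Finset.sum_le_sum fun j _ =>
      mul_le_mul_of_nonneg_left (key j) (hNnn i j)
  rw [hvG']
  exact this
end

section
/- Let S be a finite state set, let γ ∈ [0,1), let G ⊊ S be a proper subset with complement Ḡ = S \ G, and for each i ∈ G let p^{(i)} ∈ ℝ^S be a stochastic vector. Call w ∈ ℝ^S feasible if w_j ≤ 1 for all j ∈ S and w_i ≤ γ Σ_{j∈S} p^{(i)}_j w_j for all i ∈ G. Define v̂ ∈ ℝ^S by v̂_j = 1 for j ∈ Ḡ and v̂_G = γ (I − γ P_{H,G})^{-1} P_{H,Ḡ} 𝟏. Then v̂ is feasible, and every feasible ŵ satisfies ŵ ≤ v̂ entrywise; consequently, every feasible ŵ ≠ v̂ satisfies Σ_{i∈S} ŵ_i < Σ_{i∈S} v̂_i, so v̂ is the unique maximizer of w ↦ Σ_{i∈S} w_i over the feasible set.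 -/
open Matrix

/-- A vector `w` is feasible for the DRP if `w ≤ 1` and `w i ≤ γ ∑ j, p i j * w j`
for every `i ∈ G`. -/
def DRPFeasible {S : Type*} [Fintype S] (γ : ℝ) (G : Finset S)
    (p : S → S → ℝ) (w : S → ℝ) : Prop :=
  (∀ j, w j ≤ 1) ∧ ∀ i ∈ G, w i ≤ γ * ∑ j, p i j * w j

/-- The vector `v̂` with `v̂ = 1` on `Ḡ` and `v̂_G = γ (I - γ P_{H,G})⁻¹ P_{H,Ḡ} 𝟏` is
feasible, dominates every feasible `ŵ` entrywise, and is the unique maximizer of the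
sum of entries over the feasible set. -/
theorem stmt_8 {S : Type*} [Fintype S] [DecidableEq S]
    (γ : ℝ) (hγ0 : 0 ≤ γ) (hγ1 : γ < 1)
    (G : Finset S) (hG : G ≠ Finset.univ)
    (p : S → S → ℝ)
    (hpnn : ∀ i ∈ G, ∀ j, 0 ≤ p i j) (hpsum : ∀ i ∈ G, ∑ j, p i j = 1)
    (PHG : Matrix G G ℝ) (hPHG : ∀ i j : G, PHG i j = p i j)
    (PHB : Matrix G (Gᶜ : Finset S) ℝ)
    (hPHB : ∀ (i : G) (j : (Gᶜ : Finset S)), PHB i j = p i j)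
    (v : S → ℝ)
    (hvout : ∀ j ∉ G, v j = 1)
    (hvin : ∀ i : G, v i = (γ • (((1 - γ • PHG)⁻¹ * PHB) *ᵥ fun _ => (1 : ℝ))) i) :
    DRPFeasible γ G p v ∧
      ∀ w : S → ℝ, DRPFeasible γ G p w →
        (∀ i, w i ≤ v i) ∧ (w ≠ v → ∑ i, w i < ∑ i, v i) := by
  -- S is nonempty since Gᶜ is nonempty
  obtain ⟨j₀, hj₀⟩ : ∃ j, j ∉ G := by
    by_contra h
    push_neg at h
    exact hG (Finset.eq_univ_iff_forall.mpr h)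
  have hSne : (Finset.univ : Finset S).Nonempty := ⟨j₀, Finset.mem_univ _⟩
  -- the matrix A = 1 - γ • PHG is invertible (strictly row diagonally dominant)
  set A : Matrix G G ℝ := 1 - γ • PHG with hA
  have hple : ∀ i ∈ G, ∀ j, p i j ≤ 1 := by
    intro i hi j
    calc p i j ≤ ∑ j, p i j :=
      Finset.single_le_sum (fun j _ => hpnn i hi j) (Finset.mem_univ j)
    _ = 1 := hpsum i hi
  have hdet : IsUnit A.det := by
    refine isUnit_iff_ne_zero.mpr (det_ne_zero_of_sum_row_lt_diag ?_)
    intro k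
    have hks : (∑ j : G, p k.1 j.1) ≤ 1 := by
      rw [Finset.sum_coe_sort G (fun j => p k.1 j)]
      calc ∑ j ∈ G, p k.1 j ≤ ∑ j, p k.1 j := by
            exact Finset.sum_le_sum_of_subset_of_nonneg (Finset.subset_univ _)
              (fun j _ _ => hpnn k.1 k.2 j)
      _ = 1 := hpsum k.1 k.2
    have hoff : ∀ j : G, j ≠ k → ‖A k j‖ = γ * p k.1 j.1 := by
      intro j hj
      have : A k j = -(γ * p k.1 j.1) := by
        simp [hA, Matrix.sub_apply, Matrix.one_apply, Matrix.smul_apply, hPHG,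
          Ne.symm hj]
      rw [this, norm_neg, Real.norm_eq_abs, abs_of_nonneg
        (mul_nonneg hγ0 (hpnn k.1 k.2 j.1))]
    have hdiag : A k k = 1 - γ * p k.1 k.1 := by
      simp [hA, Matrix.sub_apply, Matrix.one_apply, Matrix.smul_apply, hPHG]
    have hdnn : 0 < 1 - γ * p k.1 k.1 := by
      have h1 : γ * p k.1 k.1 ≤ γ * 1 := by
        exact mul_le_mul_of_nonneg_left (hple k.1 k.2 k.1) hγ0
      nlinarith
    calc ∑ j ∈ Finset.univ.erase k, ‖A k j‖
        = ∑ j ∈ Finset.univ.erase k, γ * p k.1 j.1 := by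
          refine Finset.sum_congr rfl fun j hj => ?_
          exact hoff j (Finset.ne_of_mem_erase hj)
      _ = γ * ((∑ j : G, p k.1 j.1) - p k.1 k.1) := by
          rw [← Finset.mul_sum, Finset.sum_erase_eq_sub (Finset.mem_univ k)]
      _ < 1 - γ * p k.1 k.1 := by nlinarith [hpnn k.1 k.2 k.1]
      _ = ‖A k k‖ := by rw [hdiag, Real.norm_eq_abs, abs_of_pos hdnn]
  -- key equation: v i = γ * ∑ j, p i j * v j for i ∈ G
  have hAinv : A * A⁻¹ = 1 := Matrix.mul_nonsing_inv A hdet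
  set x : G → ℝ := fun i => v i.1 with hx
  have hxeq : A *ᵥ x = γ • (PHB *ᵥ fun _ => (1 : ℝ)) := by
    have hx' : x = γ • ((A⁻¹ * PHB) *ᵥ fun _ => (1 : ℝ)) := by
      funext i; exact hvin i
    rw [hx', Matrix.mulVec_smul, Matrix.mulVec_mulVec, ← Matrix.mul_assoc,
      hAinv, Matrix.one_mul]
  have key : ∀ i : G, v i.1 = γ * ∑ j, p i.1 j * v j := by
    intro i
    have h1 : (A *ᵥ x) i = x i - γ * (PHG *ᵥ x) i := by
      simp [hA, Matrix.sub_mulVec, Matrix.smul_mulVec, Matrix.one_mulVec]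
    have h2 : (A *ᵥ x) i = γ * (PHB *ᵥ fun _ => (1 : ℝ)) i := by
      rw [hxeq]; rfl
    have hsplit : ∑ j, p i.1 j * v j
        = (PHG *ᵥ x) i + (PHB *ᵥ fun _ => (1 : ℝ)) i := by
      rw [← Finset.sum_add_sum_compl G (fun j => p i.1 j * v j)]
      congr 1
      · rw [← Finset.sum_coe_sort G (fun j => p i.1 j * v j)]
        simp only [Matrix.mulVec, dotProduct]
        exact Finset.sum_congr rfl fun j _ => by rw [hPHG]
      · rw [← Finset.sum_coe_sort (Gᶜ : Finset S) (fun j => p i.1 j * v j)]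
        simp only [Matrix.mulVec, dotProduct]
        refine Finset.sum_congr rfl fun j _ => ?_
        rw [hPHB, hvout j.1 (Finset.mem_compl.mp j.2)]
    have : x i - γ * (PHG *ᵥ x) i = γ * (PHB *ᵥ fun _ => (1 : ℝ)) i := by
      rw [← h1, h2]
    rw [hsplit]
    show x i = _
    linarith
  -- the maximum-principle lemma
  have main : ∀ (u : S → ℝ) (c : ℝ), 0 ≤ c → (∀ j ∉ G, u j ≤ c) →
      (∀ i ∈ G, u i ≤ γ * ∑ j, p i j * u j) → ∀ j, u j ≤ c := by
    intro u c hc hout hin j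
    obtain ⟨i₀, -, hmax⟩ := Finset.exists_max_image Finset.univ u hSne
    by_cases hi : i₀ ∈ G
    · have h1 : u i₀ ≤ γ * u i₀ := by
        calc u i₀ ≤ γ * ∑ j, p i₀ j * u j := hin i₀ hi
          _ ≤ γ * ∑ j, p i₀ j * u i₀ := by
              refine mul_le_mul_of_nonneg_left (Finset.sum_le_sum fun j _ => ?_) hγ0
              exact mul_le_mul_of_nonneg_left (hmax j (Finset.mem_univ j)) (hpnn i₀ hi j)
          _ = γ * u i₀ := by rw [← Finset.sum_mul, hpsum i₀ hi, one_mul]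
      have h0 : u i₀ ≤ 0 := by nlinarith
      exact le_trans (hmax j (Finset.mem_univ j)) (h0.trans hc)
    · exact (hmax j (Finset.mem_univ j)).trans (hout i₀ hi)
  have hvfeas : DRPFeasible γ G p v := by
    constructor
    · refine main v 1 zero_le_one (fun j hj => le_of_eq (hvout j hj)) ?_
      intro i hi
      exact le_of_eq (key ⟨i, hi⟩)
    · intro i hi
      exact le_of_eq (key ⟨i, hi⟩)
  refine ⟨hvfeas, fun w hw => ?_⟩
  have hle : ∀ i, w i ≤ v i := by
    intro i
    have := main (fun j => w j - v j) 0 le_rfl ?_ ?_ i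
    · linarith
    · intro j hj
      show w j - v j ≤ 0
      rw [hvout j hj]
      linarith [hw.1 j]
    · intro i hi
      have h1 : w i ≤ γ * ∑ j, p i j * w j := hw.2 i hi
      have h2 : v i = γ * ∑ j, p i j * v j := key ⟨i, hi⟩
      have h3 : (∑ j, p i j * (w j - v j))
          = (∑ j, p i j * w j) - ∑ j, p i j * v j := by
        rw [← Finset.sum_sub_distrib]
        exact Finset.sum_congr rfl fun j _ => by ring
      simp only [h3]
      nlinarith
  refine ⟨hle, fun hne => ?_⟩
  obtain ⟨i₁, hi₁⟩ : ∃ i, w i ≠ v i := by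
    by_contra h
    push_neg at h
    exact hne (funext h)
  exact Finset.sum_lt_sum (fun i _ => hle i)
    ⟨i₁, Finset.mem_univ i₁, lt_of_le_of_ne (hle i₁) hi₁⟩
end

section
/- Consider a finite-state, finite-action discounted MDP: a finite state set S, a finite nonempty action set U, for each u ∈ U a stochastic matrix P(u) ∈ ℝ^{S×S} and a cost vector c(u) ∈ ℝ^S, and a discount factor γ ∈ [0,1). Suppose v ∈ ℝ^S satisfies v_i ≤ c_i(u) + γ Σ_{j∈S} P_{ij}(u) v_j for every i ∈ S and u ∈ U, and define v̂ ∈ ℝ^S by v̂_i = min_{u∈U} { c_i(u) + γ Σ_j P_{ij}(u) v_j } − v_i. Then for every pair (i,u) with v̂_i − γ Σ_j P_{ij}(u) v̂_j > 0, one has c_i(u) + γ Σ_j P_{ij}(u) v_j − v_i ≥ v̂_i − γ Σ_j P_{ij}(u) v̂_j; consequently the primal-dual step size θ = min over such pairs of (c_i(u) + γ Σ_j P_{ij}(u) v_j − v_i) / (v̂_i − γ Σ_j P_{ij}(u) v̂_j) satisfies θ ≥ 1. -/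
/-- With the value-iteration update direction `v̂`, every pair `(i,u)` with positive
denominator `v̂_i - γ ∑_j P_{ij}(u) v̂_j` has numerator
`c_i(u) + γ ∑_j P_{ij}(u) v_j - v_i` at least as large; consequently the primal-dual
step size `θ` is at least `1`. -/
theorem stmt_14 {S U : Type*} [Fintype S] [Fintype U] [Nonempty U]
    (γ : ℝ) (hγ0 : 0 ≤ γ) (hγ1 : γ < 1)
    (P : U → Matrix S S ℝ) (c : U → S → ℝ)
    (hPnn : ∀ u i j, 0 ≤ P u i j) (hProw : ∀ u i, ∑ j, P u i j = 1)
    (v : S → ℝ)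
    (hfeas : ∀ i u, v i ≤ c u i + γ * ∑ j, P u i j * v j)
    (vhat : S → ℝ)
    (hvhat : ∀ i, vhat i =
      (Finset.univ.inf' Finset.univ_nonempty fun u =>
        c u i + γ * ∑ j, P u i j * v j) - v i)
    (K : Finset (S × U))
    (hKdef : ∀ q : S × U,
      q ∈ K ↔ 0 < vhat q.1 - γ * ∑ j, P q.2 q.1 j * vhat j)
    (hKne : K.Nonempty) :
    (∀ i u, 0 < vhat i - γ * ∑ j, P u i j * vhat j →
        vhat i - γ * ∑ j, P u i j * vhat j ≤ c u i + γ * ∑ j, P u i j * v j - v i) ∧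
      1 ≤ K.inf' hKne fun q =>
        (c q.2 q.1 + γ * ∑ j, P q.2 q.1 j * v j - v q.1) /
          (vhat q.1 - γ * ∑ j, P q.2 q.1 j * vhat j) := by
  have hvnn : ∀ i, 0 ≤ vhat i := by
    intro i
    rw [hvhat i]
    have := Finset.le_inf' (s := (Finset.univ : Finset U)) Finset.univ_nonempty
      (f := fun u => c u i + γ * ∑ j, P u i j * v j) (a := v i) (fun u _ => hfeas i u)
    linarith
  have key : ∀ i u, vhat i - γ * ∑ j, P u i j * vhat j ≤
      c u i + γ * ∑ j, P u i j * v j - v i := by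
    intro i u
    have h1 : vhat i ≤ c u i + γ * ∑ j, P u i j * v j - v i := by
      rw [hvhat i]
      have := Finset.inf'_le (s := (Finset.univ : Finset U))
        (f := fun u => c u i + γ * ∑ j, P u i j * v j) (Finset.mem_univ u)
      linarith
    have h2 : 0 ≤ γ * ∑ j, P u i j * vhat j := by
      apply mul_nonneg hγ0
      exact Finset.sum_nonneg fun j _ => mul_nonneg (hPnn u i j) (hvnn j)
    linarith
  refine ⟨fun i u _ => key i u, ?_⟩
  apply Finset.le_inf'
  intro q hq
  have hd : 0 < vhat q.1 - γ * ∑ j, P q.2 q.1 j * vhat j := (hKdef q).mp hq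
  rw [le_div_iff₀ hd, one_mul]
  exact key q.1 q.2
end
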